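/- The Kolmogorov–Chaitin complexity function 𝒦 is not computable. -/

import Mathlib

/-- The standard enumeration of unary partial computable functions. -/
def phi (n : ℕ) : ℕ →. ℕ :=
  Nat.Partrec.Code.eval (Denumerable.ofNat Nat.Partrec.Code n)

/-- `W n` is the domain of the `n`-th partial computable function. -/
def W (n : ℕ) : Set ℕ := {m | (phi n m).Dom}

/-- The diagonal (non-)halting set `K = {n : φ_n(n) is undefined}`. -/
def K : Set ℕ := {n | n ∉ W n}

/-- A set is recursively enumerable iff it is `W n` for some `n`. -/
def RE (A : Set ℕ) : Prop := ∃ n, A = W n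

/-- Kolmogorov–Chaitin complexity: least index `i` with `φ_i(0)↓ = m`. -/
noncomputable def KC (m : ℕ) : ℕ := sInf {i | m ∈ phi i 0}

lemma KC_set_nonempty (m : ℕ) : {i | m ∈ phi i 0}.Nonempty := by
  refine ⟨Encodable.encode (Nat.Partrec.Code.const m), ?_⟩
  simp [phi, Nat.Partrec.Code.eval_const]

lemma KC_mem (m : ℕ) : m ∈ phi (KC m) 0 :=
  Nat.sInf_mem (KC_set_nonempty m)

lemma KC_le {m i : ℕ} (h : m ∈ phi i 0) : KC m ≤ i := Nat.sInf_le h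

/-- Only `x+1` values have complexity ≤ x, so some value exceeds it. -/
lemma exists_KC_gt (x : ℕ) : ∃ y, x < KC y := by
  by_contra h
  push_neg at h
  -- KC : ℕ → Fin (x+1) is injective since phi i 0 is single-valued
  have hinj : Function.Injective (fun m => (⟨KC m, Nat.lt_succ_of_le (h m)⟩ : Fin (x+1))) := by
    intro a b hab
    have : KC a = KC b := congrArg Fin.val hab
    exact Part.mem_unique (KC_mem a) (this ▸ KC_mem b)
  exact not_injective_infinite_finite _ hinj

theorem KC_not_computable : ¬ Computable KC := by
  intro hKC
  classical
  have hex : ∀ x, ∃ y, x < KC y := exists_KC_gt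
  set f : ℕ → ℕ := fun x => Nat.find (hex x) with hf
  have hfspec : ∀ x, x < KC (f x) := fun x => Nat.find_spec (hex x)
  -- f is computable
  have hfc : Computable f := by
    have hc2 : Computable₂ (fun (x n : ℕ) => decide (x < KC n)) :=
      Computable.to₂ (Primrec.nat_lt.decide.to_comp.comp Computable.fst (hKC.comp Computable.snd))
    have hp : Partrec₂ (fun (x n : ℕ) => (Part.some (decide (x < KC n)) : Part Bool)) :=
      hc2.partrec₂
    have := Partrec.rfind hp
    refine Partrec.of_eq this fun x => ?_
    apply Part.eq_some_iff.2
    refine Nat.mem_rfind.2 ?_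
    constructor
    · simpa using Nat.find_spec (hex x)
    · intro m hm
      simpa using Nat.find_min (hex x) hm
  -- fixed point: a code c computing the constant f (encode c)
  obtain ⟨c, hc⟩ := Nat.Partrec.Code.fixed_point₂
    (f := fun c _ => (Part.some (f (Encodable.encode c)) : Part ℕ))
    ((Computable.to₂ ((hfc.comp Computable.encode).comp Computable.fst)).partrec₂)
  have hmem : f (Encodable.encode c) ∈ phi (Encodable.encode c) 0 := by
    simp [phi, Denumerable.ofNat_encode, hc]
  exact absurd (KC_le hmem) (not_le.2 (hfspec (Encodable.encode c)))
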